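/- Let 0 < β < ∞ and Ψ ∈ 𝓛. Then the function θ(x) = (1−x)^β·Ψ(1/(1−x)) is essentially decreasing on [0,1): there exists C = C(Ψ, β) > 0 such that (1−y)^β·Ψ(1/(1−y)) ≤ C·(1−x)^β·Ψ(1/(1−x)) whenever 0 ≤ x ≤ y < 1. -/

import Mathlib

open MeasureTheory Real Set

/-- `Ψ` is essentially increasing on `[0,∞)`. -/
def EssInc (Ψ : ℝ → ℝ) : Prop := ∃ C > (0:ℝ), ∀ x y : ℝ, 0 ≤ x → x ≤ y → Ψ x ≤ C * Ψ y

/-- `Ψ` is essentially decreasing on `[0,∞)`. -/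
def EssDec (Ψ : ℝ → ℝ) : Prop := ∃ C > (0:ℝ), ∀ x y : ℝ, 0 ≤ x → x ≤ y → Ψ y ≤ C * Ψ x

/-- The doubling property `Ψ(x) ≍ Ψ(x²)` on `[0,∞)`. -/
def Doubling (Ψ : ℝ → ℝ) : Prop :=
  ∃ c > (0:ℝ), ∃ C > (0:ℝ), ∀ x : ℝ, 0 ≤ x → c * Ψ (x ^ 2) ≤ Ψ x ∧ Ψ x ≤ C * Ψ (x ^ 2)

/-- The class `𝓛`: positive, essentially monotonic, doubling. -/
def InL (Ψ : ℝ → ℝ) : Prop :=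
  (∀ x : ℝ, 0 ≤ x → 0 < Ψ x) ∧ (EssInc Ψ ∨ EssDec Ψ) ∧ Doubling Ψ

lemma psi_growth (β : ℝ) (hβ : 0 < β) (Ψ : ℝ → ℝ)
    (hpos : ∀ x : ℝ, 0 ≤ x → 0 < Ψ x)
    (A : ℝ) (hA : 0 < A) (hinc : ∀ x y : ℝ, 0 ≤ x → x ≤ y → Ψ x ≤ A * Ψ y)
    (c : ℝ) (hc : 0 < c) (hdb : ∀ x : ℝ, 0 ≤ x → c * Ψ (x ^ 2) ≤ Ψ x) :
    ∃ C > (0:ℝ), ∀ s t : ℝ, 1 ≤ s → s ≤ t → Ψ t ≤ C * (t / s) ^ β * Ψ s := by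
  have hΨ1 : 0 < Ψ 1 := hpos 1 zero_le_one
  have hA1 : 1 ≤ A := by
    have := hinc 1 1 zero_le_one le_rfl
    nlinarith
  have hc1 : c ≤ 1 := by
    have := hdb 1 zero_le_one
    norm_num at this
    nlinarith
  set S0 : ℝ := max 2 (c⁻¹ ^ (β⁻¹ : ℝ)) with hS0def
  have hS02 : (2:ℝ) ≤ S0 := le_max_left _ _
  have hS0pos : (0:ℝ) < S0 := by linarith
  have hS0pow : ∀ s : ℝ, S0 ≤ s → c⁻¹ ≤ s ^ (β:ℝ) := by
    intro s hs
    have h1 : c⁻¹ ^ (β⁻¹ : ℝ) ≤ s := le_trans (le_max_right _ _) hs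
    have hinv : (0:ℝ) ≤ c⁻¹ := by positivity
    calc c⁻¹ = (c⁻¹ ^ (β⁻¹ : ℝ)) ^ (β:ℝ) := by
            rw [← Real.rpow_mul hinv, inv_mul_cancel₀ (ne_of_gt hβ), Real.rpow_one]
      _ ≤ s ^ (β:ℝ) := Real.rpow_le_rpow (by positivity) h1 (le_of_lt hβ)
  set K : ℝ := A / c with hKdef
  have hK1 : 1 ≤ K := by
    rw [hKdef, le_div_iff₀ hc]; nlinarith
  have hKpos : 0 < K := lt_of_lt_of_le one_pos hK1
  -- key induction
  have key : ∀ n : ℕ, ∀ s t : ℝ, S0 ≤ s → s ≤ t → t ≤ s ^ (2^n) →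
      Ψ t ≤ K * (t / s) ^ (β:ℝ) * Ψ s := by
    intro n
    induction n with
    | zero =>
      intro s t hs hst hts
      simp only [pow_zero, pow_one] at hts
      have : t = s := le_antisymm hts hst
      subst this
      have hspos : 0 < t := lt_of_lt_of_le hS0pos hs
      rw [div_self (ne_of_gt hspos), Real.one_rpow]
      nlinarith [hpos t (le_of_lt hspos)]
    | succ n ih =>
      intro s t hs hst hts
      have hspos : 0 < s := lt_of_lt_of_le hS0pos hs
      have htpos : 0 < t := lt_of_lt_of_le hspos hst
      have hts1 : 1 ≤ t / s := (one_le_div hspos).mpr hst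
      have hrpow1 : 1 ≤ (t / s) ^ (β:ℝ) := Real.one_le_rpow hts1 (le_of_lt hβ)
      have hΨs : 0 < Ψ s := hpos s (le_of_lt hspos)
      by_cases h : t ≤ s ^ 2
      · -- one squaring step
        have h1 : Ψ t ≤ A * Ψ (s ^ 2) := hinc t (s^2) (le_of_lt htpos) h
        have h2 : c * Ψ (s ^ 2) ≤ Ψ s := hdb s (le_of_lt hspos)
        have hKs : Ψ t ≤ K * Ψ s := by
          rw [hKdef, div_mul_eq_mul_div, le_div_iff₀ hc]
          nlinarith
        calc Ψ t ≤ K * Ψ s := hKs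
          _ = K * 1 * Ψ s := by ring
          _ ≤ K * (t / s) ^ (β:ℝ) * Ψ s := by gcongr
      · push_neg at h
        have hs2 : S0 ≤ s ^ 2 := le_trans hs (by nlinarith)
        have h2 : s ^ 2 ≤ t := le_of_lt h
        have h3 : t ≤ (s ^ 2) ^ (2^n) := by
          rw [← pow_mul, ← pow_succ']
          exact hts
        have h4 := ih (s^2) t hs2 h2 h3
        have hd : c * Ψ (s ^ 2) ≤ Ψ s := hdb s (le_of_lt hspos)
        have hΨs2 : 0 < Ψ (s^2) := hpos _ (by positivity)
        have hsplit : (t / s^2) ^ (β:ℝ) = (t / s) ^ (β:ℝ) * (s⁻¹) ^ (β:ℝ) := by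
          rw [← Real.mul_rpow (by positivity) (by positivity)]
          congr 1
          rw [sq, ← div_div, div_eq_mul_inv]
        have hsinv : (s⁻¹) ^ (β:ℝ) ≤ c := by
          have hcs := hS0pow s hs
          have hsb : 0 < s ^ (β:ℝ) := by positivity
          rw [Real.inv_rpow (le_of_lt hspos)]
          calc (s ^ (β:ℝ))⁻¹ ≤ (c⁻¹)⁻¹ := by
                apply inv_anti₀ (by positivity) hcs
            _ = c := inv_inv c
        have hd' : Ψ (s ^ 2) ≤ Ψ s / c := by
          rw [le_div_iff₀ hc]; linarith [mul_comm c (Ψ (s^2))]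
        calc Ψ t ≤ K * ((t / s) ^ (β:ℝ) * (s⁻¹) ^ (β:ℝ)) * Ψ (s^2) := by
              rw [← hsplit]; exact h4
          _ ≤ K * ((t / s) ^ (β:ℝ) * c) * (Ψ s / c) := by
              gcongr
          _ = K * (t / s) ^ (β:ℝ) * Ψ s := by
              field_simp
  -- from key : for all s ≥ S0, s ≤ t
  have key2 : ∀ s t : ℝ, S0 ≤ s → s ≤ t → Ψ t ≤ K * (t / s) ^ (β:ℝ) * Ψ s := by
    intro s t hs hst
    obtain ⟨n, hn⟩ := pow_unbounded_of_one_lt t (by norm_num : (1:ℝ) < 2)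
    apply key n s t hs hst
    calc t ≤ 2 ^ n := le_of_lt hn
      _ ≤ 2 ^ (2^n) := by
          apply pow_le_pow_right₀ (by norm_num)
          exact le_of_lt (Nat.lt_two_pow_self (n := n))
      _ ≤ s ^ (2^n) := by
          apply pow_le_pow_left₀ (by norm_num)
          linarith
  -- lower bound on Ψ s for s ≥ 1
  have hlow : ∀ s : ℝ, 1 ≤ s → 1 ≤ A * Ψ s / Ψ 1 := by
    intro s hs
    have := hinc 1 s zero_le_one hs
    rw [le_div_iff₀ hΨ1]
    linarith
  have hΨS0 : 0 < Ψ S0 := hpos _ (le_of_lt hS0pos)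
  refine ⟨K * (A * A * Ψ S0 / Ψ 1), by positivity, ?_⟩
  intro s t hs hst
  have hspos : 0 < s := lt_of_lt_of_le one_pos hs
  have htpos : 0 < t := lt_of_lt_of_le hspos hst
  have hΨs : 0 < Ψ s := hpos s (le_of_lt hspos)
  have hΨt : 0 < Ψ t := hpos t (le_of_lt htpos)
  have hts1 : 1 ≤ t / s := (one_le_div hspos).mpr hst
  have hrpow1 : 1 ≤ (t / s) ^ (β:ℝ) := Real.one_le_rpow hts1 (le_of_lt hβ)
  have hlows := hlow s hs
  by_cases hsS0 : S0 ≤ s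
  · have := key2 s t hsS0 hst
    calc Ψ t ≤ K * (t / s) ^ (β:ℝ) * Ψ s := this
      _ = K * 1 * ((t / s) ^ (β:ℝ) * Ψ s) := by ring
      _ ≤ K * (A * A * Ψ S0 / Ψ 1) * ((t / s) ^ (β:ℝ) * Ψ s) := by
          gcongr
          calc (1:ℝ) ≤ A * Ψ S0 / Ψ 1 := hlow S0 (by linarith)
            _ = 1 * (A * Ψ S0 / Ψ 1) := by ring
            _ ≤ A * (A * Ψ S0 / Ψ 1) := by gcongr
            _ = A * A * Ψ S0 / Ψ 1 := by ring
      _ = K * (A * A * Ψ S0 / Ψ 1) * (t / s) ^ (β:ℝ) * Ψ s := by ring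
  · push_neg at hsS0
    by_cases htS0 : t ≤ S0
    · -- t ≤ S0 : Ψ t ≤ A Ψ S0 ≤ A Ψ S0 * (A Ψ s / Ψ 1)
      have h1 : Ψ t ≤ A * Ψ S0 := hinc t S0 (le_of_lt htpos) htS0
      calc Ψ t ≤ A * Ψ S0 := h1
        _ = A * Ψ S0 * 1 := by ring
        _ ≤ A * Ψ S0 * (A * Ψ s / Ψ 1) := by gcongr
        _ = 1 * (A * A * Ψ S0 / Ψ 1) * 1 * Ψ s := by field_simp
        _ ≤ K * (A * A * Ψ S0 / Ψ 1) * (t / s) ^ (β:ℝ) * Ψ s := by gcongr <;> positivity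
    · push_neg at htS0
      have h1 := key2 S0 t le_rfl (le_of_lt htS0)
      have hmono : (t / S0) ^ (β:ℝ) ≤ (t / s) ^ (β:ℝ) := by
        apply Real.rpow_le_rpow (by positivity) _ (le_of_lt hβ)
        apply div_le_div_of_nonneg_left (le_of_lt htpos) hspos (le_of_lt hsS0)
      calc Ψ t ≤ K * (t / S0) ^ (β:ℝ) * Ψ S0 := h1
        _ ≤ K * (t / s) ^ (β:ℝ) * Ψ S0 := by gcongr
        _ = K * (t / s) ^ (β:ℝ) * Ψ S0 * 1 := by ring
        _ ≤ K * (t / s) ^ (β:ℝ) * Ψ S0 * (A * Ψ s / Ψ 1) := by gcongr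
        _ = K * (A * Ψ S0 / Ψ 1) * (t / s) ^ (β:ℝ) * Ψ s * A / A := by field_simp
        _ = K * (A * A * Ψ S0 / Ψ 1) * (t / s) ^ (β:ℝ) * Ψ s / A := by field_simp
        _ ≤ K * (A * A * Ψ S0 / Ψ 1) * (t / s) ^ (β:ℝ) * Ψ s := by
            apply div_le_self (by positivity) hA1

theorem stmt6 (β : ℝ) (hβ : 0 < β) (Ψ : ℝ → ℝ) (hΨ : InL Ψ) :
    ∃ C > (0:ℝ), ∀ x y : ℝ, 0 ≤ x → x ≤ y → y < 1 →
      (1 - y) ^ β * Ψ (1 / (1 - y)) ≤ C * ((1 - x) ^ β * Ψ (1 / (1 - x))) := by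
  obtain ⟨hpos, hmono, c, hc, Cd, hCd, hdb⟩ := hΨ
  rcases hmono with ⟨A, hA, hinc⟩ | ⟨A, hA, hdec⟩
  · -- essentially increasing case
    obtain ⟨C, hC, hgrow⟩ := psi_growth β hβ Ψ hpos A hA hinc c hc (fun x hx => (hdb x hx).1)
    refine ⟨C, hC, ?_⟩
    intro x y hx hxy hy1
    have hy : 0 < 1 - y := by linarith
    have hx1 : 0 < 1 - x := by linarith
    have hxs : 1 - y ≤ 1 - x := by linarith
    set s : ℝ := 1 / (1 - x) with hsdef
    set t : ℝ := 1 / (1 - y) with htdef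
    have hs1 : 1 ≤ s := by
      rw [hsdef, le_div_iff₀ hx1]; linarith
    have hst : s ≤ t := by
      rw [hsdef, htdef]
      apply one_div_le_one_div_of_le hy hxs
    have hspos : 0 < s := lt_of_lt_of_le one_pos hs1
    have htpos : 0 < t := lt_of_lt_of_le hspos hst
    have h1 := hgrow s t hs1 hst
    have hts : t / s = (1 - x) / (1 - y) := by
      rw [hsdef, htdef]
      field_simp
    have hkey : (1 - y) ^ (β:ℝ) * (t / s) ^ (β:ℝ) = (1 - x) ^ (β:ℝ) := by
      rw [← Real.mul_rpow (le_of_lt hy) (by rw [hts]; positivity), hts]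
      congr 1
      field_simp
    calc (1 - y) ^ (β:ℝ) * Ψ t ≤ (1 - y) ^ (β:ℝ) * (C * (t / s) ^ (β:ℝ) * Ψ s) := by
          gcongr
      _ = C * ((1 - y) ^ (β:ℝ) * (t / s) ^ (β:ℝ)) * Ψ s := by ring
      _ = C * ((1 - x) ^ (β:ℝ) * Ψ s) := by rw [hkey]; ring
  · -- essentially decreasing case: easy
    refine ⟨A, hA, ?_⟩
    intro x y hx hxy hy1
    have hy : 0 < 1 - y := by linarith
    have hx1 : 0 < 1 - x := by linarith
    have hxs : 1 - y ≤ 1 - x := by linarith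
    have hst : 1 / (1 - x) ≤ 1 / (1 - y) := one_div_le_one_div_of_le hy hxs
    have hspos : (0:ℝ) < 1 / (1 - x) := by positivity
    have h1 : Ψ (1 / (1 - y)) ≤ A * Ψ (1 / (1 - x)) := hdec _ _ (le_of_lt hspos) hst
    have h2 : (1 - y) ^ (β:ℝ) ≤ (1 - x) ^ (β:ℝ) :=
      Real.rpow_le_rpow (le_of_lt hy) hxs (le_of_lt hβ)
    have hΨy : 0 < Ψ (1 / (1 - y)) := hpos _ (by positivity)
    have hΨx : 0 < Ψ (1 / (1 - x)) := hpos _ (le_of_lt hspos)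
    calc (1 - y) ^ (β:ℝ) * Ψ (1 / (1 - y)) ≤ (1 - x) ^ (β:ℝ) * (A * Ψ (1 / (1 - x))) := by
          apply mul_le_mul h2 h1 (le_of_lt hΨy) (by positivity)
      _ = A * ((1 - x) ^ (β:ℝ) * Ψ (1 / (1 - x))) := by ring
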